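/- arXiv:math/0612710 — 2 statements merged into one kernel-verified Lean document; each statement's English description precedes it below -/
import Mathlib

section
/- Suppose for each t ≥ 0 the random typed mass-partition (X_n(t), T_n(t))_{n≥1} has Σ_n X_n(t) ≤ 1, and suppose the martingale convergence M(θ,t) → M(θ,∞) of Theorem 4 holds with M(θ,∞) > 0 a.s. and min_j v_j(θ) > 0, for θ in a neighborhood of θ̄ where θ̄ maximizes φ(θ)/(θ+1). Then almost surely lim_{t→∞} t^{-1} log X_1(t) = −φ'(θ̄), where X_1(t) = max_n X_n(t) is the largest fragment mass at time t. -/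
open MeasureTheory Filter Set

set_option maxHeartbeats 1000000 in
/-- Decay rate of the largest fragment: if the Biggins-type martingales
`M(θ,t) = e^{tφ(θ)} Σ_n v_{T_n(t)}(θ) X_n(t)^{θ+1}` converge to a strictly positive
limit, with positive eigenvectors `v(θ)`, for `θ` in a neighborhood of the point `θ̄`
maximizing `φ(θ)/(θ+1)` (so that `φ(θ̄) = (θ̄+1)φ'(θ̄)`), then almost surely
`t⁻¹ log X₁(t) → −φ'(θ̄)` where `X₁(t) = X t ω 0` is the largest fragment mass. -/
theorem stmt13 (k : ℕ) {Ω : Type*} [MeasurableSpace Ω]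
    (μ : Measure Ω) [IsProbabilityMeasure μ]
    (X : ℝ → Ω → ℕ → ℝ) (T : ℝ → Ω → ℕ → Fin k)
    (hX0 : ∀ t ω n, 0 ≤ X t ω n) (hXsum : ∀ t ω, (∑' n, X t ω n) ≤ 1)
    (hXmax : ∀ t ω n, X t ω n ≤ X t ω 0) (hX1pos : ∀ t ω, 0 < X t ω 0)
    (φ : ℝ → ℝ) (v : ℝ → Fin k → ℝ) (θb ε : ℝ) (hθb : 0 ≤ θb) (hε : 0 < ε)
    (hφdiff : ∀ θ ∈ Ioo (θb - ε) (θb + ε), DifferentiableAt ℝ φ θ)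
    (hvpos : ∀ θ ∈ Ioo (θb - ε) (θb + ε), ∀ j, 0 < v θ j)
    (hmax : ∀ θ ∈ Ioo (θb - ε) (θb + ε), φ θ / (θ + 1) ≤ φ θb / (θb + 1))
    (hcrit : φ θb = (θb + 1) * deriv φ θb)
    (Mlim : ℝ → Ω → ℝ)
    (hconv : ∀ θ ∈ Ioo (θb - ε) (θb + ε), ∀ᵐ ω ∂μ,
      Tendsto (fun t => Real.exp (t * φ θ) * ∑' n, v θ (T t ω n) * X t ω n ^ (θ + 1))
        atTop (nhds (Mlim θ ω)) ∧ 0 < Mlim θ ω) :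
    ∀ᵐ ω ∂μ,
      Tendsto (fun t => Real.log (X t ω 0) / t) atTop (nhds (-(deriv φ θb))) := by
  classical
  -- nonemptiness
  have hΩ : Nonempty Ω := by
    by_contra h
    rw [not_nonempty_iff] at h
    have h1 : μ Set.univ = 1 := measure_univ
    rw [Set.univ_eq_empty_iff.2 h] at h1
    simp at h1
  have hFk : Nonempty (Fin k) := ⟨T 0 hΩ.some 0⟩
  have hθ1 : (0:ℝ) < θb + 1 := by linarith
  have hθbmem : θb ∈ Ioo (θb - ε) (θb + ε) := ⟨by linarith, by linarith⟩
  set c := deriv φ θb with hc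
  -- lower bound on eigenvector at θb
  obtain ⟨a, hapos, ha⟩ : ∃ a, 0 < a ∧ ∀ j, a ≤ v θb j := by
    refine ⟨Finset.univ.inf' Finset.univ_nonempty (v θb), ?_, ?_⟩
    · exact (Finset.lt_inf'_iff _).2 fun j _ => hvpos θb hθbmem j
    · exact fun j => Finset.inf'_le _ (Finset.mem_univ j)
  -- small increments
  set δ : ℕ → ℝ := fun m => min ε 1 / ((m : ℝ) + 2) with hδdef
  have hδpos : ∀ m, 0 < δ m := fun m => div_pos (lt_min hε one_pos) (by positivity)
  have hδltε : ∀ m, δ m < ε := by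
    intro m
    have hm2 : (0:ℝ) < (m : ℝ) + 2 := by positivity
    rw [hδdef]
    simp only
    rw [div_lt_iff₀ hm2]
    have h1 : min ε 1 ≤ ε := min_le_left _ _
    have h2 : (1:ℝ) < (m:ℝ) + 2 := by
      have := Nat.cast_nonneg (α := ℝ) m; linarith
    nlinarith
  have hδ0 : Tendsto δ atTop (nhds 0) := by
    have h1 : Tendsto (fun m : ℕ => ((m:ℝ) + 2)) atTop atTop :=
      tendsto_atTop_add_const_right _ 2 tendsto_natCast_atTop_atTop
    simpa [hδdef] using Tendsto.div_atTop (tendsto_const_nhds (x := min ε 1)) h1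
  have hmemp : ∀ m, θb + δ m ∈ Ioo (θb - ε) (θb + ε) := fun m =>
    ⟨by linarith [hδpos m], by linarith [hδltε m]⟩
  -- slope convergence
  have hderiv : HasDerivAt φ c θb := (hφdiff θb hθbmem).hasDerivAt
  have hslopeT := hasDerivAt_iff_tendsto_slope.1 hderiv
  have hseq : Tendsto (fun m : ℕ => θb + δ m) atTop (nhdsWithin θb {θb}ᶜ) := by
    rw [tendsto_nhdsWithin_iff]
    constructor
    · have := tendsto_const_nhds (x := θb) (f := atTop (α := ℕ)) |>.add hδ0
      simpa using this
    · filter_upwards with m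
      have := hδpos m
      simp only [Set.mem_compl_iff, Set.mem_singleton_iff]
      intro h
      nlinarith
  have hslope : Tendsto (fun m => (φ (θb + δ m) - φ θb) / δ m) atTop (nhds c) := by
    have h1 := hslopeT.comp hseq
    refine h1.congr fun m => ?_
    simp only [Function.comp_apply, slope_def_field, add_sub_cancel_left]
  -- a.e. combination
  have hae2 : ∀ᵐ ω ∂μ, ∀ m : ℕ,
      Tendsto (fun t => Real.exp (t * φ (θb + δ m)) *
          ∑' n, v (θb + δ m) (T t ω n) * X t ω n ^ ((θb + δ m) + 1))
        atTop (nhds (Mlim (θb + δ m) ω)) ∧ 0 < Mlim (θb + δ m) ω :=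
    ae_all_iff.2 fun m => hconv _ (hmemp m)
  filter_upwards [hconv θb hθbmem, hae2] with ω hω1 hω2
  -- pointwise setup
  set S : ℝ → ℕ → ℝ := fun t n => v θb (T t ω n) * X t ω n ^ (θb + 1) with hSdef
  have hSnn : ∀ t n, 0 ≤ S t n := fun t n =>
    mul_nonneg (hvpos θb hθbmem _).le (Real.rpow_nonneg (hX0 t ω n) _)
  set C := Mlim θb ω + 1 with hCdef
  have hCpos : 0 < C := by have := hω1.2; linarith
  have hub : ∀ᶠ t in atTop,
      Real.exp (t * φ θb) * ∑' n, S t n < C := hω1.1.eventually_lt_const (lt_add_one _)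
  have hlb : ∀ᶠ t in atTop,
      Mlim θb ω / 2 < Real.exp (t * φ θb) * ∑' n, S t n :=
    hω1.1.eventually_const_lt (by linarith [hω1.2])
  have hMl2pos : 0 < Mlim θb ω / 2 := by linarith [hω1.2]
  have hsummable : ∀ t, 0 < Real.exp (t * φ θb) * ∑' n, S t n → Summable (S t) := by
    intro t ht
    by_contra h
    rw [tsum_eq_zero_of_not_summable h, mul_zero] at ht
    exact lt_irrefl _ ht
  rw [tendsto_order]
  constructor
  · -- lower bound
    intro b hb
    obtain ⟨m, hm⟩ : ∃ m, (φ (θb + δ m) - φ θb) / δ m < -b :=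
      (hslope.eventually_lt_const (by linarith)).exists
    set p := δ m with hpdef
    set θp := θb + δ m with hθpdef
    have hppos : 0 < p := hδpos m
    have hΔ : b * p + (φ θp - φ θb) < 0 := by
      have := (div_lt_iff₀ hppos).1 hm
      linarith
    -- eigenvector upper bound at θp
    set B := 1 + ∑ j, v θp j with hBdef
    have hBpos : 0 < B := by
      have : (0:ℝ) ≤ ∑ j, v θp j :=
        Finset.sum_nonneg fun j _ => (hvpos θp (hmemp m) j).le
      linarith
    have hB : ∀ j, v θp j ≤ B := by
      intro j
      have h1 : v θp j ≤ ∑ j', v θp j' :=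
        Finset.single_le_sum (fun j' _ => (hvpos θp (hmemp m) j').le) (Finset.mem_univ j)
      linarith
    set K := B / a with hKdef
    have hKpos : 0 < K := div_pos hBpos hapos
    set mp := Mlim θp ω / 2 with hmpdef
    have hmppos : 0 < mp := half_pos (hω2 m).2
    have hMp : ∀ᶠ t in atTop, mp <
        Real.exp (t * φ θp) * ∑' n, v θp (T t ω n) * X t ω n ^ (θp + 1) :=
      (hω2 m).1.eventually_const_lt (by linarith [(hω2 m).2])
    set D := Real.log mp - Real.log K - Real.log C with hDdef
    set e := -(b * p + (φ θp - φ θb)) with hedef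
    have hepos : 0 < e := by rw [hedef]; linarith
    filter_upwards [hMp, hub, hlb, eventually_ge_atTop (1:ℝ),
      eventually_gt_atTop (-D / e)] with t h1 h2 h3 h4 h5
    have htpos : (0:ℝ) < t := lt_of_lt_of_le one_pos h4
    have hMfpos : 0 < Real.exp (t * φ θb) * ∑' n, S t n := lt_trans hMl2pos h3
    have hsum := hsummable t hMfpos
    have hX1 := hX1pos t ω
    have hX1p : 0 < X t ω 0 ^ p := Real.rpow_pos_of_pos hX1 p
    -- termwise comparison
    have hterm : ∀ n, v θp (T t ω n) * X t ω n ^ (θp + 1) ≤ K * X t ω 0 ^ p * S t n := by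
      intro n
      rcases eq_or_lt_of_le (hX0 t ω n) with h0 | h0
      · rw [← h0, Real.zero_rpow (by nlinarith : θp + 1 ≠ 0), mul_zero]
        exact mul_nonneg (by positivity) (hSnn t n)
      · have hsplit : X t ω n ^ (θp + 1) = X t ω n ^ p * X t ω n ^ (θb + 1) := by
          rw [← Real.rpow_add h0]
          congr 1; linarith [hθpdef, hpdef]
        rw [hsplit]
        have h6 : X t ω n ^ p ≤ X t ω 0 ^ p :=
          Real.rpow_le_rpow (hX0 t ω n) (hXmax t ω n) hppos.le
        have h7 : v θp (T t ω n) * (X t ω n ^ p * X t ω n ^ (θb + 1)) ≤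
            B * (X t ω 0 ^ p * X t ω n ^ (θb + 1)) := by
          apply mul_le_mul (hB _) _ (by positivity) hBpos.le
          exact mul_le_mul_of_nonneg_right h6 (Real.rpow_nonneg (hX0 t ω n) _)
        refine h7.trans ?_
        rw [hSdef]
        have h8 : a * X t ω n ^ (θb + 1) ≤ v θb (T t ω n) * X t ω n ^ (θb + 1) :=
          mul_le_mul_of_nonneg_right (ha _) (Real.rpow_nonneg (hX0 t ω n) _)
        calc B * (X t ω 0 ^ p * X t ω n ^ (θb + 1))
            = K * X t ω 0 ^ p * (a * X t ω n ^ (θb + 1)) := by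
              rw [hKdef]; field_simp
          _ ≤ K * X t ω 0 ^ p * (v θb (T t ω n) * X t ω n ^ (θb + 1)) := by
              apply mul_le_mul_of_nonneg_left h8 (by positivity)
    have hG : Summable (fun n => K * X t ω 0 ^ p * S t n) := hsum.mul_left _
    have hLsum : Summable (fun n => v θp (T t ω n) * X t ω n ^ (θp + 1)) :=
      Summable.of_nonneg_of_le
        (fun n => mul_nonneg (hvpos θp (hmemp m) _).le (Real.rpow_nonneg (hX0 t ω n) _))
        hterm hG
    have hts : (∑' n, v θp (T t ω n) * X t ω n ^ (θp + 1)) ≤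
        K * X t ω 0 ^ p * ∑' n, S t n := by
      calc (∑' n, v θp (T t ω n) * X t ω n ^ (θp + 1))
          ≤ ∑' n, K * X t ω 0 ^ p * S t n := Summable.tsum_le_tsum hterm hLsum hG
        _ = K * X t ω 0 ^ p * ∑' n, S t n := tsum_mul_left
    have hTnn : (0:ℝ) ≤ ∑' n, S t n := tsum_nonneg (hSnn t)
    -- combine
    have h8 : mp * Real.exp (t * φ θb) <
        Real.exp (t * φ θp) * (K * X t ω 0 ^ p) * C := by
      have h6 : mp < Real.exp (t * φ θp) * (K * X t ω 0 ^ p * ∑' n, S t n) :=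
        lt_of_lt_of_le h1 (mul_le_mul_of_nonneg_left hts (Real.exp_pos _).le)
      calc mp * Real.exp (t * φ θb)
          < Real.exp (t * φ θp) * (K * X t ω 0 ^ p * ∑' n, S t n) *
              Real.exp (t * φ θb) := by
            exact mul_lt_mul_of_pos_right h6 (Real.exp_pos _)
        _ = Real.exp (t * φ θp) * (K * X t ω 0 ^ p) *
              (Real.exp (t * φ θb) * ∑' n, S t n) := by ring
        _ ≤ Real.exp (t * φ θp) * (K * X t ω 0 ^ p) * C := by
            apply mul_le_mul_of_nonneg_left h2.le (by positivity)
    have h9 := Real.log_lt_log (by positivity) h8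
    rw [Real.log_mul (ne_of_gt hmppos) (ne_of_gt (Real.exp_pos _)), Real.log_exp,
      Real.log_mul (by positivity) (ne_of_gt hCpos),
      Real.log_mul (ne_of_gt (Real.exp_pos _)) (by positivity), Real.log_exp,
      Real.log_mul (ne_of_gt hKpos) (ne_of_gt hX1p), Real.log_rpow hX1] at h9
    -- h9 : log mp + t * φ θb < t * φ θp + (log K + p * log X1) + log C
    rw [lt_div_iff₀ htpos]
    have h10 : -D < t * e := by
      rw [div_lt_iff₀ hepos] at h5; exact h5
    have h11 : p * (b * t) < p * Real.log (X t ω 0) := by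
      rw [hDdef] at h10
      rw [hedef] at h10
      nlinarith
    exact (mul_lt_mul_iff_right₀ hppos).1 h11
  · -- upper bound
    intro b hb
    have hepos : 0 < (θb + 1) * b + φ θb := by
      rw [hcrit]
      nlinarith [hb, hθ1]
    set e2 := (θb + 1) * b + φ θb with he2def
    set D2 := Real.log C - Real.log a with hD2def
    filter_upwards [hub, hlb, eventually_ge_atTop (1:ℝ),
      eventually_gt_atTop (D2 / e2)] with t h2 h3 h4 h5
    have htpos : (0:ℝ) < t := lt_of_lt_of_le one_pos h4
    have hMfpos : 0 < Real.exp (t * φ θb) * ∑' n, S t n := lt_trans hMl2pos h3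
    have hsum := hsummable t hMfpos
    have hX1 := hX1pos t ω
    have hX1p : 0 < X t ω 0 ^ (θb + 1) := Real.rpow_pos_of_pos hX1 _
    have hterm0 : a * X t ω 0 ^ (θb + 1) ≤ S t 0 :=
      mul_le_mul_of_nonneg_right (ha _) (Real.rpow_nonneg (hX0 t ω 0) _)
    have h6 : S t 0 ≤ ∑' n, S t n := Summable.le_tsum hsum 0 fun n _ => hSnn t n
    have h7 : Real.exp (t * φ θb) * (a * X t ω 0 ^ (θb + 1)) ≤ C := by
      calc Real.exp (t * φ θb) * (a * X t ω 0 ^ (θb + 1))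
          ≤ Real.exp (t * φ θb) * ∑' n, S t n := by
            apply mul_le_mul_of_nonneg_left (hterm0.trans h6) (Real.exp_pos _).le
        _ ≤ C := h2.le
    have h9 := Real.log_le_log (by positivity) h7
    rw [Real.log_mul (ne_of_gt (Real.exp_pos _)) (by positivity), Real.log_exp,
      Real.log_mul (ne_of_gt hapos) (ne_of_gt hX1p), Real.log_rpow hX1] at h9
    -- h9 : t * φ θb + (log a + (θb+1) * log X1) ≤ log C
    rw [div_lt_iff₀ htpos]
    have h10 : D2 < t * e2 := by rw [div_lt_iff₀ hepos] at h5; exact h5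
    have h11 : (θb + 1) * Real.log (X t ω 0) < (θb + 1) * (b * t) := by
      rw [hD2def] at h10
      rw [he2def] at h10
      nlinarith
    exact (mul_lt_mul_iff_right₀ hθ1).1 h11
end

section
/- Let A(θ) be a family of k×k irreducible nonnegative matrices depending on a real parameter θ, with entries of the form A(θ)_{ij} = ∫ e^{−θx} m_{ij}(dx) for finite measures m_{ij} on ℝ, not all concentrated at 0. Then θ ↦ log ρ(A(θ)) is a convex function of θ, where ρ denotes the Perron–Frobenius (spectral radius) eigenvalue. -/
open MeasureTheory Set


namespace Stmt14Aux

variable {k : ℕ}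

/-- entries of powers of an entrywise-nonnegative matrix are nonnegative -/
lemma pow_entry_nonneg {B : Matrix (Fin k) (Fin k) ℝ} (hB : ∀ i j, 0 ≤ B i j) :
    ∀ (n : ℕ) i j, 0 ≤ (B ^ n) i j := by
  intro n
  induction n with
  | zero =>
    intro i j
    by_cases h : i = j <;> simp [pow_zero, Matrix.one_apply, h]
  | succ n ih =>
    intro i j
    rw [pow_succ, Matrix.mul_apply]
    exact Finset.sum_nonneg fun l _ => mul_nonneg (ih i l) (hB l j)

lemma mulVec_apply' (B : Matrix (Fin k) (Fin k) ℝ) (x : Fin k → ℝ) (i : Fin k) :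
    B.mulVec x i = ∑ j, B i j * x j := rfl

/-- a positive sum of products with nonneg factors yields a positive first factor somewhere -/
lemma exists_pos_of_sum_pos {f g : Fin k → ℝ} (hf : ∀ j, 0 ≤ f j) (hg : ∀ j, 0 ≤ g j)
    (h : 0 < ∑ j, f j * g j) : ∃ j, 0 < f j ∧ 0 < g j := by
  by_contra hc
  push_neg at hc
  have : ∑ j, f j * g j ≤ 0 := by
    apply Finset.sum_nonpos
    intro j _
    rcases lt_or_ge 0 (f j) with hfj | hfj
    · have := hc j hfj
      exact mul_nonpos_of_nonneg_of_nonpos (hf j) this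
    · exact mul_nonpos_of_nonpos_of_nonneg hfj (hg j)
  linarith

section Perron

variable [NeZero k]

/-- Perron–Frobenius existence: an irreducible entrywise nonnegative matrix with no zero
row has a strictly positive eigenvector with positive eigenvalue. -/
lemma perron_exists (B : Matrix (Fin k) (Fin k) ℝ) (hB : ∀ i j, 0 ≤ B i j)
    (hirr : ∀ i j, ∃ n : ℕ, 0 < (B ^ n) i j) (hrow : ∀ i, ∃ l, 0 < B i l) :
    ∃ r : ℝ, 0 < r ∧ ∃ z : Fin k → ℝ, (∀ i, 0 < z i) ∧ B.mulVec z = r • z := by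
  classical
  have hk : Nonempty (Fin k) := ⟨⟨0, Nat.pos_of_ne_zero (NeZero.ne k)⟩⟩
  -- choose exponents and the matrix C = ∑_{n ≤ N} B^n, entrywise positive
  choose nn hnn using hirr
  set N : ℕ := Finset.sup Finset.univ (fun p : Fin k × Fin k => nn p.1 p.2) with hN
  set C : Matrix (Fin k) (Fin k) ℝ := ∑ n ∈ Finset.range (N + 1), B ^ n with hC
  have hCnonneg : ∀ i j, 0 ≤ C i j := by
    intro i j
    rw [hC, Matrix.sum_apply]
    exact Finset.sum_nonneg fun n _ => pow_entry_nonneg hB n i j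
  have hCpos : ∀ i j, 0 < C i j := by
    intro i j
    rw [hC, Matrix.sum_apply]
    have hmem : nn i j ∈ Finset.range (N + 1) := by
      refine Finset.mem_range.2 (Nat.lt_succ_of_le ?_)
      exact Finset.le_sup (f := fun p : Fin k × Fin k => nn p.1 p.2)
        (Finset.mem_univ (i, j))
    exact Finset.sum_pos' (fun n _ => pow_entry_nonneg hB n i j) ⟨nn i j, hmem, hnn i j⟩
  have hcomm : B * C = C * B := by
    rw [hC, Finset.mul_sum, Finset.sum_mul]
    congr 1
    ext n
    rw [← pow_succ, ← pow_succ']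
  -- C maps nonzero nonnegative vectors to strictly positive vectors
  have hCmap : ∀ x : Fin k → ℝ, (∀ j, 0 ≤ x j) → (∃ j, 0 < x j) → ∀ i, 0 < C.mulVec x i := by
    intro x hx ⟨j₀, hj₀⟩ i
    rw [Matrix.mulVec, dotProduct]
    exact Finset.sum_pos' (fun j _ => mul_nonneg (hCnonneg i j) (hx j))
      ⟨j₀, Finset.mem_univ j₀, mul_pos (hCpos i j₀) hj₀⟩
  -- the compact set K of normalized strictly positive vectors
  set K : Set (Fin k → ℝ) := (fun x => C.mulVec x) '' stdSimplex ℝ (Fin k) with hK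
  have hCcont : Continuous fun x : Fin k → ℝ => C.mulVec x := by
    apply continuous_pi
    intro i
    simp only [Matrix.mulVec, dotProduct]
    exact continuous_finset_sum _ fun j _ => continuous_const.mul (continuous_apply j)
  have hKcompact : IsCompact K := (isCompact_stdSimplex _ _).image hCcont
  have hsimplex_ne : (stdSimplex ℝ (Fin k)).Nonempty := by
    refine ⟨fun _ => (k : ℝ)⁻¹, fun _ => inv_nonneg.mpr (Nat.cast_nonneg k), ?_⟩
    rw [Finset.sum_const, Finset.card_univ, Fintype.card_fin, nsmul_eq_mul, mul_inv_cancel₀]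
    exact_mod_cast NeZero.ne k
  have hKne : K.Nonempty := hsimplex_ne.image _
  have hKpos : ∀ x ∈ K, ∀ i, 0 < x i := by
    rintro x ⟨u, hu, rfl⟩ i
    refine hCmap u (fun j => hu.1 j) ?_ i
    by_contra hc
    push_neg at hc
    have hz : ∀ j, u j = 0 := fun j => le_antisymm (hc j) (hu.1 j)
    have h1 := hu.2
    rw [Finset.sum_eq_zero (fun j _ => hz j)] at h1
    exact zero_ne_one h1
  -- upper bound M for feasible lambda
  set M : ℝ := ∑ i, ∑ j, B i j with hM
  have hMnonneg : 0 ≤ M :=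
    Finset.sum_nonneg fun i _ => Finset.sum_nonneg fun j _ => hB i j
  have hfeas_le : ∀ (lam : ℝ) (x : Fin k → ℝ), (∀ j, 0 ≤ x j) → 0 < ∑ j, x j →
      (∀ i, lam * x i ≤ B.mulVec x i) → lam ≤ M := by
    intro lam x hx hxs hfe
    have h1 : lam * ∑ i, x i ≤ ∑ i, B.mulVec x i := by
      rw [Finset.mul_sum]
      exact Finset.sum_le_sum fun i _ => hfe i
    have h2 : ∑ i, B.mulVec x i ≤ M * ∑ j, x j := by
      have hmv : ∀ i, B.mulVec x i = ∑ j, B i j * x j := fun i => rfl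
      calc ∑ i, B.mulVec x i = ∑ i, ∑ j, B i j * x j := by simp [hmv]
        _ ≤ ∑ i, ∑ j, B i j * ∑ l, x l := by
            refine Finset.sum_le_sum fun i _ => Finset.sum_le_sum fun j _ => ?_
            exact mul_le_mul_of_nonneg_left
              (Finset.single_le_sum (fun l _ => hx l) (Finset.mem_univ j)) (hB i j)
        _ = M * ∑ l, x l := by simp [hM, Finset.sum_mul]
    have h3 := le_trans h1 h2
    exact le_of_mul_le_mul_right (by linarith) hxs
  -- the compact feasible set
  set SS : Set (ℝ × (Fin k → ℝ)) :=
    {p | p.1 ∈ Icc (0:ℝ) M ∧ p.2 ∈ K ∧ ∀ i, p.1 * p.2 i ≤ B.mulVec p.2 i} with hSS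
  have hBcont : Continuous fun x : Fin k → ℝ => B.mulVec x := by
    apply continuous_pi
    intro i
    simp only [Matrix.mulVec, dotProduct]
    exact continuous_finset_sum _ fun j _ => continuous_const.mul (continuous_apply j)
  have hSSclosed : IsClosed SS := by
    have h1 : IsClosed {p : ℝ × (Fin k → ℝ) | p.1 ∈ Icc (0:ℝ) M} :=
      isClosed_Icc.preimage continuous_fst
    have h2 : IsClosed {p : ℝ × (Fin k → ℝ) | p.2 ∈ K} :=
      (hKcompact.isClosed).preimage continuous_snd
    have h3 : IsClosed {p : ℝ × (Fin k → ℝ) | ∀ i, p.1 * p.2 i ≤ B.mulVec p.2 i} := by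
      have heq : {p : ℝ × (Fin k → ℝ) | ∀ i, p.1 * p.2 i ≤ B.mulVec p.2 i}
          = ⋂ i, {p : ℝ × (Fin k → ℝ) | p.1 * p.2 i ≤ B.mulVec p.2 i} := by
        ext p; simp
      rw [heq]
      refine isClosed_iInter fun i => isClosed_le ?_ ?_
      · exact continuous_fst.mul ((continuous_apply i).comp continuous_snd)
      · exact (continuous_apply i).comp (hBcont.comp continuous_snd)
    have heq2 : SS = ({p : ℝ × (Fin k → ℝ) | p.1 ∈ Icc (0:ℝ) M} ∩
        ({p | p.2 ∈ K} ∩ {p | ∀ i, p.1 * p.2 i ≤ B.mulVec p.2 i})) := by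
      ext p; simp only [hSS, mem_setOf_eq, mem_inter_iff, and_assoc]
    rw [heq2]
    exact h1.inter (h2.inter h3)
  have hSScompact : IsCompact SS := by
    refine ((isCompact_Icc : IsCompact (Icc (0:ℝ) M)).prod hKcompact).of_isClosed_subset hSSclosed ?_
    rintro ⟨lam, x⟩ ⟨h1, h2, _⟩
    exact ⟨h1, h2⟩
  have hSSne : SS.Nonempty := by
    obtain ⟨x₀, hx₀⟩ := hKne
    refine ⟨(0, x₀), ⟨le_refl 0, hMnonneg⟩, hx₀, fun i => ?_⟩
    rw [zero_mul]
    show (0:ℝ) ≤ ∑ j, B i j * x₀ j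
    exact Finset.sum_nonneg fun j _ => mul_nonneg (hB i j) (hKpos x₀ hx₀ j).le
  -- maximize the first coordinate
  obtain ⟨⟨r, z⟩, hrzmem, hrzmax⟩ :=
    hSScompact.exists_isMaxOn hSSne continuous_fst.continuousOn
  obtain ⟨hrIcc, hzK, hfeas⟩ := hrzmem
  have hzpos : ∀ i, 0 < z i := hKpos z hzK
  have hmax : ∀ p ∈ SS, p.1 ≤ r := fun p hp => hrzmax hp
  -- show B z = r z
  have heig : B.mulVec z = r • z := by
    by_contra hne
    set d : Fin k → ℝ := B.mulVec z - r • z with hd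
    have hdnonneg : ∀ i, 0 ≤ d i := by
      intro i
      simp only [hd, Pi.sub_apply, Pi.smul_apply, smul_eq_mul, sub_nonneg]
      exact hfeas i
    have hdne : ∃ i, 0 < d i := by
      by_contra hc
      push_neg at hc
      exact hne (sub_eq_zero.mp (funext fun i => le_antisymm (hc i) (hdnonneg i)))
    set y : Fin k → ℝ := C.mulVec z with hy
    have hypos : ∀ i, 0 < y i :=
      hCmap z (fun j => (hzpos j).le) ⟨Classical.arbitrary (Fin k), hzpos _⟩
    have hCd : ∀ i, 0 < C.mulVec d i := hCmap d hdnonneg hdne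
    have hCdeq : C.mulVec d = B.mulVec y - r • y := by
      rw [hd, Matrix.mulVec_sub, Matrix.mulVec_smul, Matrix.mulVec_mulVec, ← hcomm,
        ← Matrix.mulVec_mulVec]
    set ε : ℝ := Finset.inf' Finset.univ ⟨Classical.arbitrary (Fin k), Finset.mem_univ _⟩
      (fun i => C.mulVec d i / y i) with hε
    have hεpos : 0 < ε := by
      rw [hε]; refine (Finset.lt_inf'_iff _).mpr ?_
      exact fun i _ => div_pos (hCd i) (hypos i)
    have hkey : ∀ i, (r + ε) * y i ≤ B.mulVec y i := by
      intro i
      have h1 : ε ≤ C.mulVec d i / y i :=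
        Finset.inf'_le _ (Finset.mem_univ i)
      have h2 : ε * y i ≤ C.mulVec d i := (le_div_iff₀ (hypos i)).mp h1
      have h3 : C.mulVec d i = B.mulVec y i - r * y i := by
        rw [hCdeq]; simp
      rw [h3] at h2
      rw [add_mul]
      linarith
    -- normalized improved witness contradicts maximality
    set s : ℝ := ∑ j, z j with hs
    have hspos : 0 < s := Finset.sum_pos (fun j _ => hzpos j) Finset.univ_nonempty
    have hu' : (s⁻¹ • z) ∈ stdSimplex ℝ (Fin k) := by
      constructor
      · intro j
        exact mul_nonneg (inv_nonneg.mpr hspos.le) (hzpos j).le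
      · simp only [Pi.smul_apply, smul_eq_mul, ← Finset.mul_sum, ← hs]
        exact inv_mul_cancel₀ hspos.ne'
    have hy'mem : (s⁻¹ • y) ∈ K :=
      ⟨s⁻¹ • z, hu', by show C.mulVec (s⁻¹ • z) = s⁻¹ • y; rw [Matrix.mulVec_smul, ← hy]⟩
    have hy'pos : ∀ j, 0 < (s⁻¹ • y) j := fun j =>
      mul_pos (inv_pos.mpr hspos) (hypos j)
    have hy'feas : ∀ i, (r + ε) * (s⁻¹ • y) i ≤ B.mulVec (s⁻¹ • y) i := by
      intro i
      rw [Matrix.mulVec_smul]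
      simp only [Pi.smul_apply, smul_eq_mul]
      rw [mul_left_comm]
      exact mul_le_mul_of_nonneg_left (hkey i) (inv_nonneg.mpr hspos.le)
    have hle : r + ε ≤ M := by
      refine hfeas_le (r + ε) (s⁻¹ • y) (fun j => (hy'pos j).le) ?_ hy'feas
      exact Finset.sum_pos (fun j _ => hy'pos j) Finset.univ_nonempty
    have hge0 : (0:ℝ) ≤ r + ε := by
      have := hrIcc.1
      linarith
    have := hmax (r + ε, s⁻¹ • y) ⟨⟨hge0, hle⟩, hy'mem, hy'feas⟩
    simp only at this
    linarith
  -- positivity of the eigenvalue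
  have hrpos : 0 < r := by
    obtain ⟨l, hl⟩ := hrow (Classical.arbitrary (Fin k))
    have hpos : 0 < B.mulVec z (Classical.arbitrary (Fin k)) := by
      show 0 < ∑ j, B (Classical.arbitrary (Fin k)) j * z j
      exact Finset.sum_pos' (fun j _ => mul_nonneg (hB _ j) (hzpos j).le)
        ⟨l, Finset.mem_univ l, mul_pos hl (hzpos l)⟩
    rw [heig] at hpos
    simp only [Pi.smul_apply, smul_eq_mul] at hpos
    rcases le_or_gt r 0 with hr | hr
    · exact absurd hpos (not_lt.mpr
        (mul_nonpos_of_nonpos_of_nonneg hr (hzpos _).le))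
    · exact hr
  exact ⟨r, hrpos, z, hzpos, heig⟩

/-- membership of an eigenvalue with nonzero eigenvector in the spectrum -/
lemma mem_spectrum_of_eigen {B : Matrix (Fin k) (Fin k) ℝ} {r : ℝ} {z : Fin k → ℝ}
    (hz : z ≠ 0) (heig : B.mulVec z = r • z) : r ∈ spectrum ℝ B := by
  classical
  rw [spectrum.mem_iff]
  intro hunit
  rw [Matrix.isUnit_iff_isUnit_det, isUnit_iff_ne_zero] at hunit
  apply hunit
  rw [← Matrix.exists_mulVec_eq_zero_iff]
  refine ⟨z, hz, ?_⟩
  rw [Algebra.algebraMap_eq_smul_one, Matrix.sub_mulVec, Matrix.smul_mulVec,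
    Matrix.one_mulVec, heig, sub_self]

/-- any real eigenvalue is bounded in absolute value using a positive super-eigenvector -/
lemma abs_eig_le {B : Matrix (Fin k) (Fin k) ℝ} (hB : ∀ i j, 0 ≤ B i j)
    {w : Fin k → ℝ} (hw : ∀ i, 0 < w i) {c : ℝ}
    (hc : ∀ i, B.mulVec w i ≤ c * w i) {lam : ℝ} (hlam : lam ∈ spectrum ℝ B) :
    |lam| ≤ c := by
  classical
  have hk : Nonempty (Fin k) := ⟨⟨0, Nat.pos_of_ne_zero (NeZero.ne k)⟩⟩
  -- extract an eigenvector
  rw [spectrum.mem_iff, Matrix.isUnit_iff_isUnit_det, isUnit_iff_ne_zero, not_not,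
    ← Matrix.exists_mulVec_eq_zero_iff] at hlam
  obtain ⟨v, hv, hveq⟩ := hlam
  rw [Algebra.algebraMap_eq_smul_one, Matrix.sub_mulVec, Matrix.smul_mulVec,
    Matrix.one_mulVec, sub_eq_zero] at hveq
  -- hveq : lam • v = B.mulVec v
  set t : ℝ := Finset.sup' Finset.univ ⟨Classical.arbitrary (Fin k), Finset.mem_univ _⟩
    (fun i => |v i| / w i) with ht
  obtain ⟨i₀, _, hi₀⟩ := Finset.exists_mem_eq_sup' (α := ℝ)
    ⟨Classical.arbitrary (Fin k), Finset.mem_univ _⟩ (fun i => |v i| / w i)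
  have htle : ∀ j, |v j| ≤ t * w j := by
    intro j
    have h1 : |v j| / w j ≤ t := by
      rw [ht]; exact Finset.le_sup' (fun i => |v i| / w i) (Finset.mem_univ j)
    exact (div_le_iff₀ (hw j)).mp h1
  have htpos : 0 < t := by
    obtain ⟨i, hi⟩ : ∃ i, v i ≠ 0 := by
      by_contra hcon
      push_neg at hcon
      exact hv (funext hcon)
    have h1 : 0 < |v i| / w i := div_pos (abs_pos.mpr hi) (hw i)
    refine lt_of_lt_of_le h1 ?_
    rw [ht]; exact Finset.le_sup' (fun i => |v i| / w i) (Finset.mem_univ i)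
  have hvi₀ : |v i₀| = t * w i₀ := by
    rw [ht, hi₀]
    exact (div_mul_cancel₀ _ (hw i₀).ne').symm
  have hineq : |lam| * (t * w i₀) ≤ c * (t * w i₀) := by
    have h1 : |lam| * |v i₀| = |lam * v i₀| := (abs_mul lam (v i₀)).symm
    have h2 : lam * v i₀ = B.mulVec v i₀ := by
      have := congrFun hveq i₀
      simpa using this
    have h3 : |B.mulVec v i₀| ≤ ∑ j, B i₀ j * |v j| := by
      rw [mulVec_apply']
      refine (Finset.abs_sum_le_sum_abs _ _).trans ?_
      refine Finset.sum_le_sum fun j _ => ?_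
      rw [abs_mul, abs_of_nonneg (hB i₀ j)]
    have h4 : ∑ j, B i₀ j * |v j| ≤ t * B.mulVec w i₀ := by
      rw [mulVec_apply', Finset.mul_sum]
      refine Finset.sum_le_sum fun j _ => ?_
      rw [mul_left_comm]
      exact mul_le_mul_of_nonneg_left (htle j) (hB i₀ j)
    have h5 : t * B.mulVec w i₀ ≤ t * (c * w i₀) :=
      mul_le_mul_of_nonneg_left (hc i₀) htpos.le
    calc |lam| * (t * w i₀) = |lam| * |v i₀| := by rw [hvi₀]
      _ = |lam * v i₀| := h1
      _ = |B.mulVec v i₀| := by rw [h2]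
      _ ≤ ∑ j, B i₀ j * |v j| := h3
      _ ≤ t * B.mulVec w i₀ := h4
      _ ≤ t * (c * w i₀) := h5
      _ = c * (t * w i₀) := by ring
  exact le_of_mul_le_mul_right hineq (mul_pos htpos (hw i₀))

end Perron

section Holder

/-- conjugate exponents from a convex combination -/
lemma conj_of_convex {a b : ℝ} (ha : 0 < a) (hb : 0 < b) (hab : a + b = 1) :
    (1 / a).HolderConjugate (1 / b) := by
  rw [Real.holderConjugate_iff]
  constructor
  · rw [lt_div_iff₀ ha, one_mul]
    linarith
  · rw [one_div, one_div, inv_inv, inv_inv]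
    exact hab

/-- Hölder for the Laplace-transform entries -/
lemma entry_holder {μ : Measure ℝ} [IsFiniteMeasure μ] {θ₀ θ₁ a b : ℝ}
    (ha : 0 < a) (hb : 0 < b) (hab : a + b = 1)
    (h0 : Integrable (fun x => Real.exp (-θ₀ * x)) μ)
    (h1 : Integrable (fun x => Real.exp (-θ₁ * x)) μ) :
    ∫ x, Real.exp (-(a * θ₀ + b * θ₁) * x) ∂μ ≤
      (∫ x, Real.exp (-θ₀ * x) ∂μ) ^ a * (∫ x, Real.exp (-θ₁ * x) ∂μ) ^ b := by
  have hpq : (1 / a).HolderConjugate (1 / b) := conj_of_convex ha hb hab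
  set F : ℝ → ℝ := fun x => Real.exp (-θ₀ * x) ^ a with hF
  set G : ℝ → ℝ := fun x => Real.exp (-θ₁ * x) ^ b with hG
  have hFnn : ∀ x, 0 ≤ F x := fun x => Real.rpow_nonneg (Real.exp_pos _).le a
  have hGnn : ∀ x, 0 ≤ G x := fun x => Real.rpow_nonneg (Real.exp_pos _).le b
  have hmemF : MemLp F (ENNReal.ofReal (1 / a)) μ := by
    have hA : ENNReal.ofReal (1 / a) ≠ 0 := by
      rw [Ne, ENNReal.ofReal_eq_zero, not_le]
      positivity
    have hB : ENNReal.ofReal (1 / a) ≠ ⊤ := ENNReal.ofReal_ne_top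
    have hmeas : AEStronglyMeasurable F μ := by
      apply Continuous.aestronglyMeasurable
      exact (Real.continuous_exp.comp (continuous_const.mul continuous_id)).rpow_const
        (fun x => Or.inl (Real.exp_pos _).ne')
    rw [← memLp_norm_rpow_iff hmeas hA hB, ENNReal.toReal_ofReal (by positivity),
      ENNReal.div_self hA hB, memLp_one_iff_integrable]
    apply h0.congr
    refine Filter.Eventually.of_forall fun x => ?_
    show Real.exp (-θ₀ * x) = ‖F x‖ ^ (1 / a)
    rw [Real.norm_of_nonneg (hFnn x)]
    show Real.exp (-θ₀ * x) = (Real.exp (-θ₀ * x) ^ a) ^ (1 / a)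
    rw [← Real.rpow_mul (Real.exp_pos _).le, mul_one_div_cancel ha.ne', Real.rpow_one]
  have hmemG : MemLp G (ENNReal.ofReal (1 / b)) μ := by
    have hA : ENNReal.ofReal (1 / b) ≠ 0 := by
      rw [Ne, ENNReal.ofReal_eq_zero, not_le]
      positivity
    have hB : ENNReal.ofReal (1 / b) ≠ ⊤ := ENNReal.ofReal_ne_top
    have hmeas : AEStronglyMeasurable G μ := by
      apply Continuous.aestronglyMeasurable
      exact (Real.continuous_exp.comp (continuous_const.mul continuous_id)).rpow_const
        (fun x => Or.inl (Real.exp_pos _).ne')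
    rw [← memLp_norm_rpow_iff hmeas hA hB, ENNReal.toReal_ofReal (by positivity),
      ENNReal.div_self hA hB, memLp_one_iff_integrable]
    apply h1.congr
    refine Filter.Eventually.of_forall fun x => ?_
    show Real.exp (-θ₁ * x) = ‖G x‖ ^ (1 / b)
    rw [Real.norm_of_nonneg (hGnn x)]
    show Real.exp (-θ₁ * x) = (Real.exp (-θ₁ * x) ^ b) ^ (1 / b)
    rw [← Real.rpow_mul (Real.exp_pos _).le, mul_one_div_cancel hb.ne', Real.rpow_one]
  have hmain := MeasureTheory.integral_mul_le_Lp_mul_Lq_of_nonneg hpq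
    (Filter.Eventually.of_forall hFnn) (Filter.Eventually.of_forall hGnn) hmemF hmemG
  have hFG : ∀ x, Real.exp (-(a * θ₀ + b * θ₁) * x) = F x * G x := by
    intro x
    show Real.exp (-(a * θ₀ + b * θ₁) * x) = Real.exp (-θ₀ * x) ^ a * Real.exp (-θ₁ * x) ^ b
    rw [← Real.exp_mul, ← Real.exp_mul, ← Real.exp_add]
    congr 1
    ring
  have hFp : ∀ x, F x ^ (1 / a) = Real.exp (-θ₀ * x) := by
    intro x
    show (Real.exp (-θ₀ * x) ^ a) ^ (1 / a) = Real.exp (-θ₀ * x)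
    rw [← Real.rpow_mul (Real.exp_pos _).le, mul_one_div_cancel ha.ne', Real.rpow_one]
  have hGq : ∀ x, G x ^ (1 / b) = Real.exp (-θ₁ * x) := by
    intro x
    show (Real.exp (-θ₁ * x) ^ b) ^ (1 / b) = Real.exp (-θ₁ * x)
    rw [← Real.rpow_mul (Real.exp_pos _).le, mul_one_div_cancel hb.ne', Real.rpow_one]
  calc ∫ x, Real.exp (-(a * θ₀ + b * θ₁) * x) ∂μ = ∫ x, F x * G x ∂μ := by
        exact integral_congr_ae (Filter.Eventually.of_forall hFG)
    _ ≤ (∫ x, F x ^ (1 / a) ∂μ) ^ (1 / (1 / a)) * (∫ x, G x ^ (1 / b) ∂μ) ^ (1 / (1 / b)) :=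
        hmain
    _ = (∫ x, Real.exp (-θ₀ * x) ∂μ) ^ a * (∫ x, Real.exp (-θ₁ * x) ∂μ) ^ b := by
        rw [one_div_one_div, one_div_one_div]
        congr 1
        · congr 1
          exact integral_congr_ae (Filter.Eventually.of_forall hFp)
        · congr 1
          exact integral_congr_ae (Filter.Eventually.of_forall hGq)

/-- Hölder for finite sums, in geometric-mean form -/
lemma sum_holder {a b : ℝ} (ha : 0 < a) (hb : 0 < b) (hab : a + b = 1)
    (f g : Fin k → ℝ) (hf : ∀ j, 0 ≤ f j) (hg : ∀ j, 0 ≤ g j) :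
    ∑ j, f j ^ a * g j ^ b ≤ (∑ j, f j) ^ a * (∑ j, g j) ^ b := by
  have hpq : (1 / a).HolderConjugate (1 / b) := conj_of_convex ha hb hab
  have := Real.inner_le_Lp_mul_Lq Finset.univ (fun j => f j ^ a) (fun j => g j ^ b) hpq
  refine this.trans (le_of_eq ?_)
  rw [one_div_one_div, one_div_one_div]
  congr 1
  · congr 1
    refine Finset.sum_congr rfl fun j _ => ?_
    rw [abs_of_nonneg (Real.rpow_nonneg (hf j) a), ← Real.rpow_mul (hf j),
      mul_one_div_cancel ha.ne', Real.rpow_one]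
  · congr 1
    refine Finset.sum_congr rfl fun j _ => ?_
    rw [abs_of_nonneg (Real.rpow_nonneg (hg j) b), ← Real.rpow_mul (hg j),
      mul_one_div_cancel hb.ne', Real.rpow_one]

end Holder

end Stmt14Aux


/-- Log-convexity of the Perron root of a family of irreducible nonnegative matrices
whose entries are Laplace transforms `A(θ)_{ij} = ∫ e^{-θx} m_{ij}(dx)` of finite
measures (not all concentrated at `0`): `θ ↦ log ρ(A(θ))` is convex, where
`ρ(A(θ)) = sup{|λ| : λ ∈ spectrum(A(θ))}` is the Perron–Frobenius eigenvalue. -/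
theorem stmt14 (k : ℕ) [NeZero k] (m : Fin k → Fin k → Measure ℝ)
    [∀ i j, IsFiniteMeasure (m i j)]
    (A : ℝ → Matrix (Fin k) (Fin k) ℝ)
    (hint : ∀ (θ : ℝ) i j, Integrable (fun x => Real.exp (-θ * x)) (m i j))
    (hA : ∀ (θ : ℝ) i j, A θ i j = ∫ x, Real.exp (-θ * x) ∂(m i j))
    (hirr : ∀ (θ : ℝ) i j, ∃ n : ℕ, 0 < ((A θ) ^ n) i j)
    (hnz : ¬ ∀ i j, m i j ({0}ᶜ) = 0) :
    ConvexOn ℝ univ (fun θ : ℝ =>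
      Real.log (sSup {r : ℝ | ∃ lam ∈ spectrum ℝ (A θ), r = |lam|})) := by
  classical
  -- basic positivity facts about entries
  have hBnn : ∀ (θ : ℝ) i j, 0 ≤ A θ i j := by
    intro θ i j
    rw [hA]
    exact integral_nonneg fun x => (Real.exp_pos _).le
  have hposm : ∀ (θ : ℝ) i j, m i j ({0}ᶜ) ≠ 0 → 0 < A θ i j := by
    intro θ i j hm
    rw [hA, integral_pos_iff_support_of_nonneg (fun x => (Real.exp_pos _).le) (hint θ i j)]
    have hsub : ({0}ᶜ : Set ℝ) ⊆ Function.support (fun x => Real.exp (-θ * x)) :=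
      fun x _ => (Real.exp_pos _).ne'
    exact lt_of_lt_of_le (pos_iff_ne_zero.mpr hm) (measure_mono hsub)
  have hrow : ∀ (θ : ℝ) i, ∃ l, 0 < A θ i l := by
    intro θ i
    by_cases hex : ∃ j, j ≠ i
    · obtain ⟨j, hj⟩ := hex
      obtain ⟨n, hn⟩ := hirr θ i j
      have hn0 : n ≠ 0 := by
        rintro rfl
        rw [pow_zero, Matrix.one_apply_ne (Ne.symm hj)] at hn
        exact lt_irrefl 0 hn
      obtain ⟨n', rfl⟩ := Nat.exists_eq_succ_of_ne_zero hn0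
      rw [pow_succ', Matrix.mul_apply] at hn
      obtain ⟨l, hl, _⟩ := Stmt14Aux.exists_pos_of_sum_pos (fun l => hBnn θ i l)
        (fun l => Stmt14Aux.pow_entry_nonneg (hBnn θ) n' l j) hn
      exact ⟨l, hl⟩
    · push_neg at hex
      push_neg at hnz
      obtain ⟨i₀, j₀, hm⟩ := hnz
      have h1 : i₀ = i := hex i₀
      have h2 : j₀ = i := hex j₀
      rw [h1, h2] at hm
      exact ⟨i, hposm θ i i hm⟩
  -- Perron data for each θ
  have hperron := fun θ : ℝ =>
    Stmt14Aux.perron_exists (A θ) (hBnn θ) (hirr θ) (hrow θ)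
  choose rr hrpos zz hzpos heig using hperron
  set S : ℝ → Set ℝ := fun θ => {s : ℝ | ∃ lam ∈ spectrum ℝ (A θ), s = |lam|} with hSdef
  have hzne : ∀ θ, zz θ ≠ 0 := by
    intro θ hcon
    have := hzpos θ ⟨0, Nat.pos_of_ne_zero (NeZero.ne k)⟩
    rw [hcon] at this
    exact lt_irrefl 0 this
  have hrmem : ∀ θ, rr θ ∈ S θ := fun θ =>
    ⟨rr θ, Stmt14Aux.mem_spectrum_of_eigen (hzne θ) (heig θ), (abs_of_pos (hrpos θ)).symm⟩
  have hupper : ∀ θ c (w : Fin k → ℝ), (∀ i, 0 < w i) →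
      (∀ i, (A θ).mulVec w i ≤ c * w i) → ∀ s ∈ S θ, s ≤ c := by
    rintro θ c w hw hc s ⟨lam, hlam, rfl⟩
    exact Stmt14Aux.abs_eig_le (hBnn θ) hw hc hlam
  have hselfbound : ∀ θ i, (A θ).mulVec (zz θ) i ≤ rr θ * zz θ i := by
    intro θ i
    rw [heig θ]
    simp
  have hsSup : ∀ θ, sSup (S θ) = rr θ := by
    intro θ
    apply le_antisymm
    · exact csSup_le ⟨rr θ, hrmem θ⟩
        (hupper θ (rr θ) (zz θ) (hzpos θ) (hselfbound θ))
    · exact le_csSup ⟨rr θ, hupper θ (rr θ) (zz θ) (hzpos θ) (hselfbound θ)⟩ (hrmem θ)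
  -- convexity
  refine convexOn_iff_forall_pos.mpr ⟨convex_univ, ?_⟩
  intro θ₀ _ θ₁ _ a b ha hb hab
  set θ : ℝ := a • θ₀ + b • θ₁ with hθ
  set w : Fin k → ℝ := fun i => zz θ₀ i ^ a * zz θ₁ i ^ b with hw
  have hwpos : ∀ i, 0 < w i := fun i =>
    mul_pos (Real.rpow_pos_of_pos (hzpos θ₀ i) a) (Real.rpow_pos_of_pos (hzpos θ₁ i) b)
  have hmv : ∀ i, (A θ).mulVec w i ≤ (rr θ₀ ^ a * rr θ₁ ^ b) * w i := by
    intro i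
    rw [Stmt14Aux.mulVec_apply']
    have hstep1 : ∀ j, A θ i j * w j ≤
        (A θ₀ i j * zz θ₀ j) ^ a * (A θ₁ i j * zz θ₁ j) ^ b := by
      intro j
      have hentry : A θ i j ≤ A θ₀ i j ^ a * A θ₁ i j ^ b := by
        have h := Stmt14Aux.entry_holder (μ := m i j) ha hb hab (hint θ₀ i j) (hint θ₁ i j)
        rw [hA θ, hA θ₀, hA θ₁]
        have hθeq : (fun x => Real.exp (-θ * x)) =
            fun x => Real.exp (-(a * θ₀ + b * θ₁) * x) := by
          funext x
          rw [hθ]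
          norm_num
        rw [hθeq]
        exact h
      calc A θ i j * w j ≤ (A θ₀ i j ^ a * A θ₁ i j ^ b) * w j :=
            mul_le_mul_of_nonneg_right hentry (hwpos j).le
        _ = (A θ₀ i j * zz θ₀ j) ^ a * (A θ₁ i j * zz θ₁ j) ^ b := by
            rw [hw, Real.mul_rpow (hBnn θ₀ i j) (hzpos θ₀ j).le,
              Real.mul_rpow (hBnn θ₁ i j) (hzpos θ₁ j).le]
            ring
    have hstep2 : ∑ j, (A θ₀ i j * zz θ₀ j) ^ a * (A θ₁ i j * zz θ₁ j) ^ b ≤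
        (∑ j, A θ₀ i j * zz θ₀ j) ^ a * (∑ j, A θ₁ i j * zz θ₁ j) ^ b :=
      Stmt14Aux.sum_holder ha hb hab _ _
        (fun j => mul_nonneg (hBnn θ₀ i j) (hzpos θ₀ j).le)
        (fun j => mul_nonneg (hBnn θ₁ i j) (hzpos θ₁ j).le)
    have hsum0 : ∑ j, A θ₀ i j * zz θ₀ j = rr θ₀ * zz θ₀ i := by
      rw [← Stmt14Aux.mulVec_apply', heig θ₀]; simp
    have hsum1 : ∑ j, A θ₁ i j * zz θ₁ j = rr θ₁ * zz θ₁ i := by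
      rw [← Stmt14Aux.mulVec_apply', heig θ₁]; simp
    calc ∑ j, A θ i j * w j
        ≤ ∑ j, (A θ₀ i j * zz θ₀ j) ^ a * (A θ₁ i j * zz θ₁ j) ^ b :=
          Finset.sum_le_sum fun j _ => hstep1 j
      _ ≤ (∑ j, A θ₀ i j * zz θ₀ j) ^ a * (∑ j, A θ₁ i j * zz θ₁ j) ^ b := hstep2
      _ = (rr θ₀ * zz θ₀ i) ^ a * (rr θ₁ * zz θ₁ i) ^ b := by rw [hsum0, hsum1]
      _ = (rr θ₀ ^ a * rr θ₁ ^ b) * w i := by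
          rw [hw, Real.mul_rpow (hrpos θ₀).le (hzpos θ₀ i).le,
            Real.mul_rpow (hrpos θ₁).le (hzpos θ₁ i).le]
          ring
  have hboundθ : sSup (S θ) ≤ rr θ₀ ^ a * rr θ₁ ^ b :=
    csSup_le ⟨rr θ, hrmem θ⟩ (hupper θ _ w hwpos hmv)
  show Real.log (sSup (S θ)) ≤ a • Real.log (sSup (S θ₀)) + b • Real.log (sSup (S θ₁))
  rw [hsSup θ₀, hsSup θ₁, smul_eq_mul, smul_eq_mul]
  calc Real.log (sSup (S θ))
      ≤ Real.log (rr θ₀ ^ a * rr θ₁ ^ b) := by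
        refine Real.log_le_log ?_ hboundθ
        rw [hsSup θ]
        exact hrpos θ
      _ = a * Real.log (rr θ₀) + b * Real.log (rr θ₁) := by
        rw [Real.log_mul (Real.rpow_pos_of_pos (hrpos θ₀) a).ne'
          (Real.rpow_pos_of_pos (hrpos θ₁) b).ne',
          Real.log_rpow (hrpos θ₀), Real.log_rpow (hrpos θ₁)]
end
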